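/- Let L be a 3-dimensional antisymmetric ℤ_p-algebra whose matrix with respect to some basis is symmetric. Then L satisfies the Jacobi identity, i.e., L is a Lie algebra over ℤ_p. -/

import Mathlib

theorem stmt6 (p : ℕ) [Fact p.Prime] {L : Type*} [AddCommGroup L] [Module ℤ_[p] L]
    (f : L →ₗ[ℤ_[p]] L →ₗ[ℤ_[p]] L) (hanti : ∀ z : L, f z z = 0)
    (b : Module.Basis (Fin 3) ℤ_[p] L) (A : Matrix (Fin 3) (Fin 3) ℤ_[p])
    (hA : f (b 1) (b 2) = ∑ i : Fin 3, A i 0 • b i ∧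
          f (b 2) (b 0) = ∑ i : Fin 3, A i 1 • b i ∧
          f (b 0) (b 1) = ∑ i : Fin 3, A i 2 • b i)
    (hsym : A.transpose = A) :
    ∀ x y z : L, f (f x y) z + f (f z x) y + f (f y z) x = 0 := by
  obtain ⟨h12, h20, h01⟩ := hA
  have hskew : ∀ x y : L, f x y = - f y x := by
    intro x y
    have h := hanti (x + y)
    simp only [map_add, LinearMap.add_apply, hanti, zero_add, add_zero] at h
    rw [add_comm] at h
    exact eq_neg_of_add_eq_zero_left h
  have h21 : f (b 2) (b 1) = -∑ i : Fin 3, A i 0 • b i := by rw [hskew, h12]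
  have h02 : f (b 0) (b 2) = -∑ i : Fin 3, A i 1 • b i := by rw [hskew, h20]
  have h10 : f (b 1) (b 0) = -∑ i : Fin 3, A i 2 • b i := by rw [hskew, h01]
  have hsym' : ∀ i j, A i j = A j i := by
    intro i j; conv_rhs => rw [← hsym]
    rfl
  have htwo : (⟨2, by omega⟩ : Fin 3) = 2 := rfl
  intro x y z
  have key : (f.compr₂ f) + ((LinearMap.lflip (R₀ := ℤ_[p])).toLinearMap ∘ₗ (f.compr₂ f).flip)
      + ((LinearMap.lflip (R₀ := ℤ_[p])).toLinearMap ∘ₗ ((LinearMap.lflip (R₀ := ℤ_[p])).toLinearMap ∘ₗ (f.compr₂ f).flip).flip) = 0 := by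
    apply b.ext; intro i
    apply b.ext; intro j
    apply b.ext; intro k
    fin_cases i <;> fin_cases j <;> fin_cases k <;>
      simp only [LinearMap.add_apply, LinearMap.comp_apply, LinearMap.compr₂_apply,
        LinearMap.flip_apply, LinearMap.lflip_apply, LinearEquiv.coe_coe, LinearMap.zero_apply,
        Fin.mk_zero, Fin.mk_one, htwo,
        Fin.isValue, Fin.sum_univ_three, hanti, h12, h20, h01, h21, h02, h10,
        map_add, map_smul, map_neg, LinearMap.smul_apply,
        LinearMap.neg_apply, map_zero, LinearMap.map_zero,
        smul_add, smul_neg, smul_smul, hsym' 1 0, hsym' 2 0, hsym' 2 1] <;>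
      module
  have h2 := DFunLike.congr_fun (DFunLike.congr_fun (DFunLike.congr_fun key x) y) z
  simpa only [LinearMap.add_apply, LinearMap.comp_apply, LinearMap.compr₂_apply,
    LinearMap.flip_apply, LinearMap.lflip_apply, LinearEquiv.coe_coe, LinearMap.zero_apply] using h2
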